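/- Combining the optimal contrastive solution with the diffused tilting lemma: if π*_{t,θ}(a_t|s,t) ∝ μ_t(a_t|s,t) · exp( log E_{μ_t(a|a_t,s,t)} e^{Q(s,a)} ), then π*_{t,θ}(·|s,t) equals the Gaussian-diffused marginal of π*(a|s) ∝ μ(a|s) e^{Q(s,a)}: π*_{t,θ}(a_t|s,t) = ∫ N(a_t|α_t a, σ_t² I) π*(a|s) da. -/

import Mathlib

open MeasureTheory Real
noncomputable def gaussDensity (d : ℕ) (σ : ℝ) (m x : EuclideanSpace ℝ (Fin d)) : ℝ :=
  (2 * Real.pi * σ ^ 2) ^ (-(d : ℝ) / 2) * Real.exp (-‖x - m‖ ^ 2 / (2 * σ ^ 2))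

lemma gauss_cont (d : ℕ) (σ : ℝ) :
    Continuous (fun p : EuclideanSpace ℝ (Fin d) × EuclideanSpace ℝ (Fin d) =>
      gaussDensity d σ p.1 p.2) := by
  unfold gaussDensity; fun_prop

lemma gauss_pos (d : ℕ) {σ : ℝ} (hσ : 0 < σ) (m x : EuclideanSpace ℝ (Fin d)) :
    0 < gaussDensity d σ m x := by
  unfold gaussDensity; positivity

lemma gauss_le (d : ℕ) {σ : ℝ} (hσ : 0 < σ) (m x : EuclideanSpace ℝ (Fin d)) :
    gaussDensity d σ m x ≤ (2 * Real.pi * σ ^ 2) ^ (-(d : ℝ) / 2) := by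
  unfold gaussDensity
  have h1 : Real.exp (-‖x - m‖ ^ 2 / (2 * σ ^ 2)) ≤ 1 := by
    apply Real.exp_le_one_iff.2
    have : (0:ℝ) < 2 * σ ^ 2 := by positivity
    have : ‖x - m‖ ^ 2 / (2 * σ ^ 2) ≥ 0 := by positivity
    linarith [neg_div (2 * σ ^ 2) (‖x - m‖ ^ 2)]
  nlinarith [Real.rpow_pos_of_pos (show (0:ℝ) < 2 * Real.pi * σ ^ 2 by positivity) (-(d : ℝ)/2),
    Real.exp_pos (-‖x - m‖ ^ 2 / (2 * σ ^ 2))]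

lemma gauss_integrable (d : ℕ) {σ : ℝ} (hσ : 0 < σ) (m : EuclideanSpace ℝ (Fin d)) :
    Integrable (fun x => gaussDensity d σ m x) := by
  unfold gaussDensity
  apply Integrable.const_mul
  have hb : (0:ℝ) < 1 / (2 * σ ^ 2) := by positivity
  have h := (GaussianFourier.integrable_cexp_neg_mul_sq_norm_add
    (V := EuclideanSpace ℝ (Fin d)) (b := ((1 / (2 * σ ^ 2) : ℝ) : ℂ)) (by rw [Complex.ofReal_re]; exact hb) 0 0).re
  have h2 : Integrable (fun x : EuclideanSpace ℝ (Fin d) => Real.exp (-‖x‖ ^ 2 / (2 * σ ^ 2))) := by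
    convert h using 2 with x
    rw [show (-((1 / (2 * σ ^ 2) : ℝ) : ℂ) * (‖x‖ : ℂ) ^ 2 + 0 * ((inner ℝ (0 : EuclideanSpace ℝ (Fin d)) x : ℝ) : ℂ)) = ((-‖x‖ ^ 2 / (2 * σ ^ 2) : ℝ) : ℂ) by push_cast; ring]
    exact (Complex.exp_ofReal_re _).symm
  have := h2.comp_sub_right m
  simpa using this

lemma gauss_integral (d : ℕ) {σ : ℝ} (hσ : 0 < σ) (m : EuclideanSpace ℝ (Fin d)) :
    ∫ x, gaussDensity d σ m x = 1 := by
  unfold gaussDensity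
  rw [integral_const_mul]
  have hb : (0:ℝ) < 1 / (2 * σ ^ 2) := by positivity
  have key : ∫ x : EuclideanSpace ℝ (Fin d), Real.exp (-‖x - m‖ ^ 2 / (2 * σ ^ 2))
      = ∫ x : EuclideanSpace ℝ (Fin d), Real.exp (-(1 / (2 * σ ^ 2)) * ‖x‖ ^ 2) := by
    rw [← integral_sub_right_eq_self (fun x : EuclideanSpace ℝ (Fin d) =>
      Real.exp (-(1 / (2 * σ ^ 2)) * ‖x‖ ^ 2)) m]
    congr 1 with x
    congr 1
    field_simp
  rw [key, GaussianFourier.integral_rexp_neg_mul_sq_norm hb]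
  have hrank : (Module.finrank ℝ (EuclideanSpace ℝ (Fin d)) : ℝ) = d := by simp
  rw [hrank]
  have hA : (0:ℝ) < 2 * Real.pi * σ ^ 2 := by positivity
  have : Real.pi / (1 / (2 * σ ^ 2)) = 2 * Real.pi * σ ^ 2 := by field_simp
  rw [this, ← Real.rpow_add hA, show (-(d:ℝ)/2 + (d:ℝ)/2) = 0 by ring, Real.rpow_zero]
/-- If `π*_t(a_t) ∝ μ_t(a_t) · exp(log E_{posterior}[e^{Q(a)}])` (i.e. the
normalized tilting of the diffused behavior marginal by the posterior log-moment
generating value), then `π*_t` equals the Gaussian-diffused marginal of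
`π*(a) ∝ μ(a) e^{Q(a)}`: tilting commutes with diffusion. -/
theorem tilting_commutes_with_diffusion (d : ℕ)
    (μ Q : EuclideanSpace ℝ (Fin d) → ℝ)
    (hμmeas : Measurable μ) (hμpos : ∀ a, 0 < μ a) (hμprob : ∫ a, μ a = 1)
    (hQmeas : Measurable Q) (hQbdd : ∃ M, ∀ a, |Q a| ≤ M)
    (αt σt : ℝ) (hαt : 0 < αt) (hσt : 0 < σt)
    (Z : ℝ) (hZ : Z = ∫ a, μ a * Real.exp (Q a))
    (hZint : Integrable (fun a => μ a * Real.exp (Q a)))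
    (pistar : EuclideanSpace ℝ (Fin d) → ℝ)
    (hpistar : ∀ a, pistar a = μ a * Real.exp (Q a) / Z)
    (μt : EuclideanSpace ℝ (Fin d) → ℝ)
    (hμt : ∀ x, μt x = ∫ a, gaussDensity d σt (αt • a) x * μ a)
    (hμtpos : ∀ x, 0 < μt x)
    (post : EuclideanSpace ℝ (Fin d) → EuclideanSpace ℝ (Fin d) → ℝ)
    (hpost : ∀ x a, post x a = μ a * gaussDensity d σt (αt • a) x / μt x)
    (Qt : EuclideanSpace ℝ (Fin d) → ℝ)
    (hQt : ∀ x, Qt x = Real.log (∫ a, post x a * Real.exp (Q a)))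
    (Zt : ℝ) (hZt : Zt = ∫ x, μt x * Real.exp (Qt x))
    (hZtint : Integrable (fun x => μt x * Real.exp (Qt x)))
    (pit : EuclideanSpace ℝ (Fin d) → ℝ)
    (hpit : ∀ x, pit x = μt x * Real.exp (Qt x) / Zt) :
    ∀ x, pit x = ∫ a, gaussDensity d σt (αt • a) x * pistar a := by
  obtain ⟨M, hM⟩ := hQbdd
  have hμint : Integrable μ := by
    by_contra h
    rw [integral_undef h] at hμprob; norm_num at hμprob
  set c : ℝ := (2 * Real.pi * σt ^ 2) ^ (-(d : ℝ) / 2) with hc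
  have hgmeas : ∀ y, Measurable (fun a => gaussDensity d σt (αt • a) y) := by
    intro y
    exact ((gauss_cont d σt).comp
      (Continuous.prodMk (continuous_const_smul αt) continuous_const)).measurable
  have hintA : ∀ y,
      Integrable (fun a => gaussDensity d σt (αt • a) y * (μ a * Real.exp (Q a))) := by
    intro y
    apply Integrable.mono (hμint.const_mul (c * Real.exp M))
    · exact ((hgmeas y).mul (hμmeas.mul hQmeas.exp)).aestronglyMeasurable
    · filter_upwards with a
      have h1 := gauss_le d hσt (αt • a) y
      have h2 := gauss_pos d hσt (αt • a) y
      have h3 := hμpos a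
      have h4 : Real.exp (Q a) ≤ Real.exp M :=
        Real.exp_le_exp.2 (le_trans (le_abs_self _) (hM a))
      have h5 := Real.exp_pos (Q a)
      rw [Real.norm_eq_abs, Real.norm_eq_abs, abs_of_nonneg (by positivity),
        abs_of_nonneg (by positivity)]
      have h6 : gaussDensity d σt (αt • a) y * (μ a * Real.exp (Q a)) ≤ c * (μ a * Real.exp M) :=
        mul_le_mul (by rw [hc]; exact h1) (mul_le_mul_of_nonneg_left h4 h3.le)
          (by positivity) (by rw [hc]; positivity)
      nlinarith [h6]
  have hkey : ∀ y, μt y * Real.exp (Qt y)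
      = ∫ a, gaussDensity d σt (αt • a) y * (μ a * Real.exp (Q a)) := by
    intro y
    set J := ∫ a, gaussDensity d σt (αt • a) y * (μ a * Real.exp (Q a)) with hJ
    have hJpos : 0 < J := by
      rw [hJ]
      refine (integral_pos_iff_support_of_nonneg (fun a => ?_) (hintA y)).2 ?_
      · have h2 := gauss_pos d hσt (αt • a) y
        have h3 := hμpos a
        have h5 := Real.exp_pos (Q a)
        positivity
      · have hs : Function.support
            (fun a => gaussDensity d σt (αt • a) y * (μ a * Real.exp (Q a))) = Set.univ := by
          ext a
          simp only [Function.mem_support, Set.mem_univ, iff_true]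
          have h2 := gauss_pos d hσt (αt • a) y
          have h3 := hμpos a
          have h5 := Real.exp_pos (Q a)
          positivity
        rw [hs]
        exact isOpen_univ.measure_pos volume ⟨0, trivial⟩
    have hIy : (∫ a, post y a * Real.exp (Q a)) = J / μt y := by
      rw [hJ, ← integral_div]
      congr 1 with a
      rw [hpost]; ring
    rw [hQt, hIy, Real.exp_log (div_pos hJpos (hμtpos y)), mul_comm]
    exact div_mul_cancel₀ J (ne_of_gt (hμtpos y))
  have hF : Integrable (Function.uncurry fun y a =>
      gaussDensity d σt (αt • a) y * (μ a * Real.exp (Q a))) := by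
    refine (integrable_prod_iff' ?_).2 ⟨?_, ?_⟩
    · apply Measurable.aestronglyMeasurable
      have : Measurable fun p : EuclideanSpace ℝ (Fin d) × EuclideanSpace ℝ (Fin d) =>
          gaussDensity d σt (αt • p.2) p.1 :=
        ((gauss_cont d σt).comp (Continuous.prodMk
          (continuous_const_smul αt |>.comp continuous_snd) continuous_fst)).measurable
      exact this.mul ((hμmeas.comp measurable_snd).mul (hQmeas.comp measurable_snd).exp)
    · filter_upwards with a
      simpa [Function.uncurry_apply_pair] using (gauss_integrable d hσt (αt • a)).mul_const (μ a * Real.exp (Q a))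
    · apply hZint.congr
      filter_upwards with a
      have hnn : ∀ y, (0:ℝ) ≤ gaussDensity d σt (αt • a) y * (μ a * Real.exp (Q a)) := by
        intro y
        have h2 := gauss_pos d hσt (αt • a) y
        have h3 := hμpos a
        have h5 := Real.exp_pos (Q a)
        positivity
      have : (∫ y, ‖gaussDensity d σt (αt • a) y * (μ a * Real.exp (Q a))‖)
          = ∫ y, gaussDensity d σt (αt • a) y * (μ a * Real.exp (Q a)) := by
        congr 1 with y
        rw [Real.norm_eq_abs, abs_of_nonneg (hnn y)]
      simp only [Function.uncurry_apply_pair, this]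
      rw [integral_mul_const, gauss_integral d hσt, one_mul]
  have hZZ : Zt = Z := by
    rw [hZt, hZ]
    calc (∫ y, μt y * Real.exp (Qt y))
        = ∫ y, ∫ a, gaussDensity d σt (αt • a) y * (μ a * Real.exp (Q a)) := by
          congr 1 with y; exact hkey y
      _ = ∫ a, ∫ y, gaussDensity d σt (αt • a) y * (μ a * Real.exp (Q a)) :=
          integral_integral_swap hF
      _ = ∫ a, μ a * Real.exp (Q a) := by
          congr 1 with a
          rw [integral_mul_const, gauss_integral d hσt, one_mul]
  intro x
  rw [hpit, hkey x, hZZ, ← integral_div]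
  congr 1 with a
  rw [hpistar]
  ring
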